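/- Let h > 0 and k, w ∈ C²([0,h]) with k > 0 on [0,h] and w(0) = w(h) = 0, and let ε > 0 satisfy k(z) ≥ ε for all z ∈ [0,h]. There exists a constant K > 0, depending only on sup_{[0,h]} |w|, k(0), ε and h, such that for every T > 0, every F ∈ C([0,T]), every q₀ ∈ C¹([0,h]), and every classical solution q of the transport equation with flux F and initial data q₀, one has for all t ∈ [0,T]: ∫₀ʰ q(z,t)² dz ≤ K e^{Kt} [ (1+t) ∫₀ʰ q₀(z)² dz + (1+t²) ∫₀ᵗ F(s)² ds ]. -/

import Mathlib

open MeasureTheory Set Filter intervalIntegral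

set_option maxHeartbeats 1000000

/-- A classical solution of the transport equation `q_t + (w q)_z = (k q_z)_z`
on `[0,h] × (0,T]` with flux boundary condition `q_z(0,t) = -F(t)`,
no-flux upper boundary condition `q_z(h,t) = 0`, and initial data `q₀`,
together with its partial derivatives `qz`, `qzz`, `qt`. -/
structure ClassicalSolution (h T : ℝ) (k w F q₀ : ℝ → ℝ)
    (q qz qzz qt : ℝ → ℝ → ℝ) : Prop where
  cont : ContinuousOn (fun x : ℝ × ℝ => q x.1 x.2) (Icc 0 h ×ˢ Icc 0 T)
  hasDeriv_z : ∀ z ∈ Icc (0:ℝ) h, ∀ t ∈ Ioc (0:ℝ) T,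
    HasDerivWithinAt (fun z' => q z' t) (qz z t) (Icc 0 h) z
  hasDeriv_zz : ∀ z ∈ Icc (0:ℝ) h, ∀ t ∈ Ioc (0:ℝ) T,
    HasDerivWithinAt (fun z' => qz z' t) (qzz z t) (Icc 0 h) z
  hasDeriv_t : ∀ z ∈ Icc (0:ℝ) h, ∀ t ∈ Ioc (0:ℝ) T,
    HasDerivWithinAt (fun t' => q z t') (qt z t) (Icc 0 T) t
  cont_z : ContinuousOn (fun x : ℝ × ℝ => qz x.1 x.2) (Icc 0 h ×ˢ Ioc 0 T)
  cont_zz : ContinuousOn (fun x : ℝ × ℝ => qzz x.1 x.2) (Icc 0 h ×ˢ Ioc 0 T)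
  cont_t : ContinuousOn (fun x : ℝ × ℝ => qt x.1 x.2) (Icc 0 h ×ˢ Ioc 0 T)
  pde : ∀ z ∈ Icc (0:ℝ) h, ∀ t ∈ Ioc (0:ℝ) T,
    qt z t + (derivWithin w (Icc 0 h) z * q z t + w z * qz z t)
      = derivWithin k (Icc 0 h) z * qz z t + k z * qzz z t
  bc_lower : ∀ t ∈ Ioc (0:ℝ) T, qz 0 t = -F t
  bc_upper : ∀ t ∈ Ioc (0:ℝ) T, qz h t = 0
  ic : ∀ z ∈ Icc (0:ℝ) h, q z 0 = q₀ z

/-- `q` is a classical solution of the transport equation (partial derivatives exist). -/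
def IsClassicalSolution (h T : ℝ) (k w F q₀ : ℝ → ℝ) (q : ℝ → ℝ → ℝ) : Prop :=
  ∃ qz qzz qt, ClassicalSolution h T k w F q₀ q qz qzz qt

/-- Energy estimate: the spatial `L²` norm of the solution is controlled by the
initial data and the flux, with a constant depending only on `sup |w|`, `k(0)`,
`ε` and `h`. -/
theorem energy_estimate
    (h ε : ℝ) (k w : ℝ → ℝ) (hh : 0 < h) (hε : 0 < ε)
    (hk : ContDiffOn ℝ 2 k (Icc 0 h)) (hw : ContDiffOn ℝ 2 w (Icc 0 h))
    (hkpos : ∀ z ∈ Icc (0:ℝ) h, 0 < k z)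
    (hkε : ∀ z ∈ Icc (0:ℝ) h, ε ≤ k z)
    (hw0 : w 0 = 0) (hwh : w h = 0) :
    ∃ K > (0:ℝ), ∀ (T : ℝ) (F q₀ : ℝ → ℝ) (q : ℝ → ℝ → ℝ),
      0 < T → ContinuousOn F (Icc 0 T) → ContDiffOn ℝ 1 q₀ (Icc 0 h) →
      IsClassicalSolution h T k w F q₀ q →
      ∀ t ∈ Icc (0:ℝ) T,
        (∫ z in (0:ℝ)..h, (q z t) ^ 2) ≤
          K * Real.exp (K * t) * ((1 + t) * (∫ z in (0:ℝ)..h, (q₀ z) ^ 2)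
            + (1 + t ^ 2) * ∫ s in (0:ℝ)..t, (F s) ^ 2) := by
  classical
  obtain ⟨W, hW⟩ := (isCompact_Icc : IsCompact (Icc (0:ℝ) h)).exists_bound_of_continuousOn
    hw.continuousOn
  have hW0 : 0 ≤ W := le_trans (norm_nonneg _) (hW 0 ⟨le_refl _, hh.le⟩)
  set K : ℝ := ε/2 * (1/h) + ε/2 + W^2/ε + 2*(k 0)^2/ε + 1 with hKdef
  have hK1 : 1 ≤ K := by
    have h1 : 0 ≤ ε/2 * (1/h) := by positivity
    have h2 : 0 ≤ ε/2 := by positivity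
    have h3 : 0 ≤ W^2/ε := by positivity
    have h4 : 0 ≤ 2*(k 0)^2/ε := by positivity
    simp only [hKdef]; linarith
  have hKpos : 0 < K := lt_of_lt_of_le one_pos hK1
  refine ⟨K, hKpos, ?_⟩
  intro T F q₀ q hT hF hq₀ hsol t ht
  obtain ⟨qz, qzz, qt, S⟩ := hsol
  -- continuity of slices
  have cQ : ∀ t' ∈ Icc (0:ℝ) T, ContinuousOn (fun z => q z t') (Icc 0 h) := fun t' ht' =>
    S.cont.comp (continuous_id.prodMk continuous_const).continuousOn (fun z hz => ⟨hz, ht'⟩)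
  have cQz : ∀ t' ∈ Ioc (0:ℝ) T, ContinuousOn (fun z => qz z t') (Icc 0 h) := fun t' ht' =>
    S.cont_z.comp (continuous_id.prodMk continuous_const).continuousOn (fun z hz => ⟨hz, ht'⟩)
  have cQt : ∀ t' ∈ Ioc (0:ℝ) T, ContinuousOn (fun z => qt z t') (Icc 0 h) := fun t' ht' =>
    S.cont_t.comp (continuous_id.prodMk continuous_const).continuousOn (fun z hz => ⟨hz, ht'⟩)
  have ck : ContinuousOn k (Icc 0 h) := hk.continuousOn
  have cw : ContinuousOn w (Icc 0 h) := hw.continuousOn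
  have cw' : ContinuousOn (derivWithin w (Icc 0 h)) (Icc 0 h) :=
    hw.continuousOn_derivWithin (uniqueDiffOn_Icc hh) one_le_two
  -- interval integrability helper
  have intCI : ∀ {f : ℝ → ℝ}, ContinuousOn f (Icc 0 h) → IntervalIntegrable f volume 0 h :=
    fun {f} hf => (by rwa [uIcc_of_le hh.le] : ContinuousOn f (uIcc 0 h)).intervalIntegrable
  -- derivatives at interior points
  have hkD : ∀ z ∈ Ioo (0:ℝ) h, HasDerivAt k (derivWithin k (Icc 0 h) z) z := fun z hz =>
    ((hk.differentiableOn two_ne_zero z (Ioo_subset_Icc_self hz)).hasDerivWithinAt).hasDerivAt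
      (Icc_mem_nhds hz.1 hz.2)
  have hwD : ∀ z ∈ Ioo (0:ℝ) h, HasDerivAt w (derivWithin w (Icc 0 h) z) z := fun z hz =>
    ((hw.differentiableOn two_ne_zero z (Ioo_subset_Icc_self hz)).hasDerivWithinAt).hasDerivAt
      (Icc_mem_nhds hz.1 hz.2)
  have qD : ∀ t' ∈ Ioc (0:ℝ) T, ∀ z ∈ Ioo (0:ℝ) h,
      HasDerivAt (fun z' => q z' t') (qz z t') z := fun t' ht' z hz =>
    (S.hasDeriv_z z (Ioo_subset_Icc_self hz) t' ht').hasDerivAt (Icc_mem_nhds hz.1 hz.2)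
  have qzD : ∀ t' ∈ Ioc (0:ℝ) T, ∀ z ∈ Ioo (0:ℝ) h,
      HasDerivAt (fun z' => qz z' t') (qzz z t') z := fun t' ht' z hz =>
    (S.hasDeriv_zz z (Ioo_subset_Icc_self hz) t' ht').hasDerivAt (Icc_mem_nhds hz.1 hz.2)
  set E : ℝ → ℝ := fun t' => ∫ z in (0:ℝ)..h, (q z t') ^ 2 with hEdef
  have Enonneg : ∀ t', 0 ≤ E t' := fun t' =>
    intervalIntegral.integral_nonneg hh.le (fun z _ => sq_nonneg _)
  -- Step 2 : FTC identity
  have step2 : ∀ t' ∈ Ioc (0:ℝ) T,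
      (∫ z in (0:ℝ)..h, (2 * q z t' * qt z t' + 2 * k z * (qz z t')^2
        + derivWithin w (Icc 0 h) z * (q z t')^2)) = 2 * k 0 * q 0 t' * F t' := by
    intro t' ht'
    have hq' := cQ t' (Ioc_subset_Icc_self ht')
    have hcont : ContinuousOn
        (fun z => 2 * q z t' * k z * qz z t' - w z * (q z t')^2) (Icc 0 h) :=
      (((continuousOn_const.mul hq').mul ck).mul (cQz t' ht')).sub (cw.mul (hq'.pow 2))
    have hderiv : ∀ z ∈ Ioo (0:ℝ) h,
        HasDerivWithinAt (fun z => 2 * q z t' * k z * qz z t' - w z * (q z t')^2)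
          (2 * q z t' * qt z t' + 2 * k z * (qz z t')^2
            + derivWithin w (Icc 0 h) z * (q z t')^2) (Ioi z) z := by
      intro z hz
      have H3 := (((qD t' ht' z hz).const_mul 2).mul (hkD z hz)).mul (qzD t' ht' z hz)
      have H4 := (hwD z hz).mul ((qD t' ht' z hz).pow 2)
      have hpde := S.pde z (Ioo_subset_Icc_self hz) t' ht'
      have heq : (2 * q z t' * qt z t' + 2 * k z * (qz z t')^2
            + derivWithin w (Icc 0 h) z * (q z t')^2)
          = ((2 * qz z t' * k z + 2 * q z t' * derivWithin k (Icc 0 h) z) * qz z t'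
              + 2 * q z t' * k z * qzz z t')
            - (derivWithin w (Icc 0 h) z * (q z t')^2
              + w z * ((2:ℕ) * q z t' ^ (2-1) * qz z t')) := by
        push_cast
        linear_combination (2 * q z t') * hpde
      rw [heq]
      exact (H3.sub H4).hasDerivWithinAt
    have hint : IntervalIntegrable (fun z => 2 * q z t' * qt z t' + 2 * k z * (qz z t')^2
        + derivWithin w (Icc 0 h) z * (q z t')^2) volume 0 h :=
      intCI ((((continuousOn_const.mul hq').mul (cQt t' ht')).add
        ((continuousOn_const.mul ck).mul ((cQz t' ht').pow 2))).add (cw'.mul (hq'.pow 2)))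
    have := intervalIntegral.integral_eq_sub_of_hasDeriv_right_of_le hh.le hcont hderiv hint
    rw [this, S.bc_upper t' ht', S.bc_lower t' ht', hw0, hwh]
    ring
  -- Step 3 : FTC identity for w q²
  have step3 : ∀ t' ∈ Ioc (0:ℝ) T,
      (∫ z in (0:ℝ)..h, (derivWithin w (Icc 0 h) z * (q z t')^2
        + 2 * w z * q z t' * qz z t')) = 0 := by
    intro t' ht'
    have hq' := cQ t' (Ioc_subset_Icc_self ht')
    have hcont : ContinuousOn (fun z => w z * (q z t')^2) (Icc 0 h) := cw.mul (hq'.pow 2)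
    have hderiv : ∀ z ∈ Ioo (0:ℝ) h,
        HasDerivWithinAt (fun z => w z * (q z t')^2)
          (derivWithin w (Icc 0 h) z * (q z t')^2 + 2 * w z * q z t' * qz z t') (Ioi z) z := by
      intro z hz
      have H := (hwD z hz).mul ((qD t' ht' z hz).pow 2)
      have heq : (derivWithin w (Icc 0 h) z * (q z t')^2 + 2 * w z * q z t' * qz z t')
          = derivWithin w (Icc 0 h) z * (q z t')^2
            + w z * ((2:ℕ) * q z t' ^ (2-1) * qz z t') := by
        push_cast; ring
      rw [heq]
      exact H.hasDerivWithinAt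
    have hint : IntervalIntegrable (fun z => derivWithin w (Icc 0 h) z * (q z t')^2
        + 2 * w z * q z t' * qz z t') volume 0 h :=
      intCI ((cw'.mul (hq'.pow 2)).add
        (((continuousOn_const.mul cw).mul hq').mul (cQz t' ht')))
    have := intervalIntegral.integral_eq_sub_of_hasDeriv_right_of_le hh.le hcont hderiv hint
    rw [this, hw0, hwh]
    ring
  -- Step 4 : trace estimate
  have step4 : ∀ t' ∈ Ioc (0:ℝ) T,
      (q 0 t')^2 ≤ (1/h) * E t' + E t' + ∫ z in (0:ℝ)..h, (qz z t')^2 := by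
    intro t' ht'
    have hq' := cQ t' (Ioc_subset_Icc_self ht')
    have hqz' := cQz t' ht'
    set R : ℝ := ∫ z in (0:ℝ)..h, ((q z t')^2 + (qz z t')^2) with hR
    have intq2 : IntervalIntegrable (fun z => (q z t')^2) volume 0 h := intCI (hq'.pow 2)
    have intqz2 : IntervalIntegrable (fun z => (qz z t')^2) volume 0 h := intCI (hqz'.pow 2)
    have pointwise : ∀ z ∈ Icc (0:ℝ) h, (q 0 t')^2 ≤ (q z t')^2 + R := by
      intro z hz
      have hsub0z : uIcc (0:ℝ) z ⊆ uIcc (0:ℝ) h := by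
        rw [uIcc_of_le hz.1, uIcc_of_le hh.le]; exact Icc_subset_Icc le_rfl hz.2
      have hsubzh : uIcc z h ⊆ uIcc (0:ℝ) h := by
        rw [uIcc_of_le hz.2, uIcc_of_le hh.le]; exact Icc_subset_Icc hz.1 le_rfl
      have hcont2 : ContinuousOn (fun u => (q u t')^2) (Icc 0 z) :=
        (hq'.mono (Icc_subset_Icc le_rfl hz.2)).pow 2
      have hderiv2 : ∀ u ∈ Ioo (0:ℝ) z, HasDerivWithinAt (fun u => (q u t')^2)
          (2 * q u t' * qz u t') (Ioi u) u := by
        intro u hu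
        have hu' : u ∈ Ioo (0:ℝ) h := ⟨hu.1, lt_of_lt_of_le hu.2 hz.2⟩
        have H := (qD t' ht' u hu').pow 2
        have heq : (2 * q u t' * qz u t') = (2:ℕ) * q u t' ^ (2-1) * qz u t' := by
          push_cast; ring
        rw [heq]; exact H.hasDerivWithinAt
      have hint2 : IntervalIntegrable (fun u => 2 * q u t' * qz u t') volume 0 z := by
        apply ContinuousOn.intervalIntegrable
        exact ((continuousOn_const.mul (hq'.mono (by rwa [uIcc_of_le hh.le] at hsub0z))).mul
          (hqz'.mono (by rwa [uIcc_of_le hh.le] at hsub0z)))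
      have ftc := intervalIntegral.integral_eq_sub_of_hasDeriv_right_of_le hz.1 hcont2
        hderiv2 hint2
      have int0z : IntervalIntegrable (fun u => (q u t')^2 + (qz u t')^2) volume 0 z :=
        (intq2.add intqz2).mono_set hsub0z
      have intzh : IntervalIntegrable (fun u => (q u t')^2 + (qz u t')^2) volume z h :=
        (intq2.add intqz2).mono_set hsubzh
      have hb1 : -(∫ u in (0:ℝ)..z, 2 * q u t' * qz u t')
          ≤ ∫ u in (0:ℝ)..z, ((q u t')^2 + (qz u t')^2) := by
        rw [← intervalIntegral.integral_neg]
        apply intervalIntegral.integral_mono_on hz.1 hint2.neg int0z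
        intro u _
        simp only [Pi.neg_apply]
        nlinarith [sq_nonneg (q u t' + qz u t')]
      have hb2 : (∫ u in (0:ℝ)..z, ((q u t')^2 + (qz u t')^2)) ≤ R := by
        have hsplit := intervalIntegral.integral_add_adjacent_intervals int0z intzh
        have h2nd : 0 ≤ ∫ u in z..h, ((q u t')^2 + (qz u t')^2) :=
          intervalIntegral.integral_nonneg hz.2 (fun u _ => by positivity)
        rw [hR]; linarith
      linarith
    have hmono := intervalIntegral.integral_mono_on hh.le intervalIntegrable_const
      (intq2.add intervalIntegrable_const) pointwise
    rw [intervalIntegral.integral_const, intervalIntegral.integral_add intq2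
      intervalIntegrable_const, intervalIntegral.integral_const] at hmono
    simp only [smul_eq_mul, sub_zero] at hmono
    have hRsplit : R = E t' + ∫ z in (0:ℝ)..h, (qz z t')^2 :=
      intervalIntegral.integral_add intq2 intqz2
    have hmono' : h * q 0 t' ^ 2 ≤ E t' + h * R := by simpa [hEdef] using hmono
    have hq0 : (q 0 t')^2 ≤ (1/h) * E t' + R := by
      rw [one_div, ← sub_le_iff_le_add, inv_mul_eq_div, le_div_iff₀ hh]
      nlinarith [hmono']
    rw [hRsplit] at hq0
    linarith
  -- Step 5 : derivative of energy
  have step5 : ∀ t' ∈ Ioo (0:ℝ) T,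
      HasDerivAt E (∫ z in (0:ℝ)..h, 2 * q z t' * qt z t') t' := by
    intro t' ht'
    have hIoc : uIoc (0:ℝ) h = Ioc 0 h := uIoc_of_le hh.le
    set a : ℝ := t'/2 with hadef
    set b : ℝ := (t' + T)/2 with hbdef
    have ha : 0 < a := by simp only [hadef]; linarith [ht'.1]
    have hbT : b < T := by simp only [hbdef]; linarith [ht'.2]
    have habsub : Icc a b ⊆ Ioo 0 T := fun x hx =>
      ⟨lt_of_lt_of_le ha hx.1, lt_of_le_of_lt hx.2 hbT⟩
    have hprod1 : (Icc (0:ℝ) h ×ˢ Icc a b) ⊆ Icc 0 h ×ˢ Icc 0 T := fun x hx =>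
      ⟨hx.1, (Ioo_subset_Icc_self (habsub hx.2))⟩
    have hprod2 : (Icc (0:ℝ) h ×ˢ Icc a b) ⊆ Icc 0 h ×ˢ Ioc 0 T := fun x hx =>
      ⟨hx.1, Ioo_subset_Ioc_self (habsub hx.2)⟩
    obtain ⟨M, hM⟩ := (isCompact_Icc.prod isCompact_Icc :
        IsCompact (Icc (0:ℝ) h ×ˢ Icc a b)).exists_bound_of_continuousOn
      ((continuousOn_const.mul (S.cont.mono hprod1)).mul (S.cont_t.mono hprod2) :
        ContinuousOn (fun x : ℝ × ℝ => 2 * q x.1 x.2 * qt x.1 x.2) _)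
    set r : ℝ := min (t'/2) ((T - t')/2) with hrdef
    have hr : 0 < r := by
      simp only [hrdef, lt_min_iff]
      constructor <;> linarith [ht'.1, ht'.2]
    have hball : Metric.ball t' r ⊆ Icc a b := by
      intro x hx
      rw [Metric.mem_ball, Real.dist_eq, abs_lt] at hx
      have h1 : r ≤ t'/2 := min_le_left _ _
      have h2 : r ≤ (T - t')/2 := min_le_right _ _
      constructor
      · simp only [hadef]; linarith [hx.1]
      · simp only [hbdef]; linarith [hx.2]
    have hmeas : ∀ᶠ x in nhds t', AEStronglyMeasurable (fun z => (q z x) ^ 2)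
        (volume.restrict (uIoc (0:ℝ) h)) := by
      filter_upwards [Ioo_mem_nhds ht'.1 ht'.2] with x hx
      rw [hIoc]
      exact (((cQ x (Ioo_subset_Icc_self hx)).pow 2).mono
        Ioc_subset_Icc_self).aestronglyMeasurable measurableSet_Ioc
    have hint : IntervalIntegrable (fun z => (q z t') ^ 2) volume 0 h :=
      intCI ((cQ t' (Ioo_subset_Icc_self ht')).pow 2)
    have hmeas' : AEStronglyMeasurable (fun z => 2 * q z t' * qt z t')
        (volume.restrict (uIoc (0:ℝ) h)) := by
      rw [hIoc]
      exact (((continuousOn_const.mul (cQ t' (Ioo_subset_Icc_self ht'))).mul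
        (cQt t' (Ioo_subset_Ioc_self ht'))).mono Ioc_subset_Icc_self).aestronglyMeasurable
        measurableSet_Ioc
    have hbound : ∀ᵐ z ∂(volume : Measure ℝ), z ∈ uIoc (0:ℝ) h →
        ∀ x ∈ Metric.ball t' r, ‖2 * q z x * qt z x‖ ≤ M := by
      refine Eventually.of_forall (fun z hz x hx => ?_)
      have hzIcc : z ∈ Icc (0:ℝ) h := Ioc_subset_Icc_self (by rwa [hIoc] at hz)
      exact hM (z, x) ⟨hzIcc, hball hx⟩
    have hdiff : ∀ᵐ z ∂(volume : Measure ℝ), z ∈ uIoc (0:ℝ) h →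
        ∀ x ∈ Metric.ball t' r, HasDerivAt (fun x => (q z x) ^ 2) (2 * q z x * qt z x) x := by
      refine Eventually.of_forall (fun z hz x hx => ?_)
      have hxO : x ∈ Ioo (0:ℝ) T := habsub (hball hx)
      have hzIcc : z ∈ Icc (0:ℝ) h := Ioc_subset_Icc_self (by rwa [hIoc] at hz)
      have H := ((S.hasDeriv_t z hzIcc x (Ioo_subset_Ioc_self hxO)).hasDerivAt
        (Icc_mem_nhds hxO.1 hxO.2)).pow 2
      have heq : (2 * q z x * qt z x) = (2:ℕ) * q z x ^ (2-1) * qt z x := by push_cast; ring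
      rw [heq]; exact H
    have key := intervalIntegral.hasDerivAt_integral_of_dominated_loc_of_deriv_le
      (F := fun x z => (q z x) ^ 2) (F' := fun x z => 2 * q z x * qt z x)
      (bound := fun _ => M) (Metric.ball_mem_nhds t' hr) hmeas hint hmeas' hbound intervalIntegrable_const hdiff
    exact key.2
  -- Step 5b : energy inequality
  have step5b : ∀ t' ∈ Ioo (0:ℝ) T,
      (∫ z in (0:ℝ)..h, 2 * q z t' * qt z t') ≤ K * E t' + K * (F t')^2 := by
    intro t' ht'
    have htoc : t' ∈ Ioc (0:ℝ) T := Ioo_subset_Ioc_self ht'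
    have hq' := cQ t' (Ioc_subset_Icc_self htoc)
    have hqz' := cQz t' htoc
    have hqt' := cQt t' htoc
    have int1 : IntervalIntegrable (fun z => 2 * q z t' * qt z t') volume 0 h :=
      intCI ((continuousOn_const.mul hq').mul hqt')
    have int2 : IntervalIntegrable (fun z => 2 * k z * (qz z t')^2) volume 0 h :=
      intCI ((continuousOn_const.mul ck).mul (hqz'.pow 2))
    have int3 : IntervalIntegrable (fun z => derivWithin w (Icc 0 h) z * (q z t')^2)
        volume 0 h := intCI (cw'.mul (hq'.pow 2))
    have int4 : IntervalIntegrable (fun z => 2 * w z * q z t' * qz z t') volume 0 h :=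
      intCI (((continuousOn_const.mul cw).mul hq').mul hqz')
    have intqz2 : IntervalIntegrable (fun z => (qz z t')^2) volume 0 h := intCI (hqz'.pow 2)
    have intq2 : IntervalIntegrable (fun z => (q z t')^2) volume 0 h := intCI (hq'.pow 2)
    have hEt : (∫ z in (0:ℝ)..h, (q z t')^2) = E t' := by rw [hEdef]
    have h2 := step2 t' htoc
    have h3 := step3 t' htoc
    rw [intervalIntegral.integral_add (int1.add int2) int3,
      intervalIntegral.integral_add int1 int2] at h2
    rw [intervalIntegral.integral_add int3 int4] at h3
    have hq0 := step4 t' htoc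
    have hQz2 : 0 ≤ ∫ z in (0:ℝ)..h, (qz z t')^2 :=
      intervalIntegral.integral_nonneg hh.le (fun z _ => sq_nonneg _)
    have hmono' : ε * (∫ z in (0:ℝ)..h, (qz z t')^2) - W^2/ε * E t'
        ≤ (∫ z in (0:ℝ)..h, 2 * k z * (qz z t')^2)
          - ∫ z in (0:ℝ)..h, 2 * w z * q z t' * qz z t' := by
      have hmono : (∫ z in (0:ℝ)..h, (ε * (qz z t')^2 - W^2/ε * (q z t')^2))
          ≤ ∫ z in (0:ℝ)..h, (2 * k z * (qz z t')^2 - 2 * w z * q z t' * qz z t') := by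
        apply intervalIntegral.integral_mono_on hh.le
          (intCI ((continuousOn_const.mul (hqz'.pow 2)).sub
            (continuousOn_const.mul (hq'.pow 2)))) (int2.sub int4)
        intro z hz
        have hwz : |w z| ≤ W := by rw [← Real.norm_eq_abs]; exact hW z hz
        have hw2 : (w z)^2 ≤ W^2 := sq_le_sq' (neg_le_of_abs_le hwz) (le_of_abs_le hwz)
        have hc : W^2/ε * ε = W^2 := div_mul_cancel₀ _ hε.ne'
        simp only [Pi.sub_apply, Pi.mul_apply, Pi.pow_apply]
        nlinarith [mul_nonneg (mul_nonneg hε.le (sub_nonneg.2 (hkε z hz)))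
            (sq_nonneg (qz z t')),
          mul_nonneg (sub_nonneg.2 hw2) (sq_nonneg (q z t')),
          sq_nonneg (ε * qz z t' - w z * q z t'), hε]
      rw [intervalIntegral.integral_sub (intqz2.const_mul ε) (intq2.const_mul (W^2/ε)),
        intervalIntegral.integral_const_mul, intervalIntegral.integral_const_mul,
        intervalIntegral.integral_sub int2 int4, hEt] at hmono
      exact hmono
    have hbd : 2 * k 0 * q 0 t' * F t'
        ≤ ε/2 * (q 0 t')^2 + 2*(k 0)^2/ε * (F t')^2 := by
      have hc2 : 2*(k 0)^2/ε * ε = 2*(k 0)^2 := div_mul_cancel₀ _ hε.ne'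
      nlinarith [sq_nonneg (ε * q 0 t' - 2 * k 0 * F t'), hε, hc2]
    have h5 : ε/2 * (q 0 t')^2 ≤ ε/2 * ((1/h) * E t' + E t'
        + ∫ z in (0:ℝ)..h, (qz z t')^2) :=
      mul_le_mul_of_nonneg_left hq0 (by positivity)
    rw [hKdef]
    linarith [h2, h3, hmono', hbd, h5,
      mul_nonneg (Enonneg t') (by positivity : (0:ℝ) ≤ 2*(k 0)^2/ε + 1),
      mul_nonneg (sq_nonneg (F t')) (by positivity : (0:ℝ) ≤ ε/2*(1/h) + ε/2 + W^2/ε + 1),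
      mul_nonneg hε.le hQz2]
  -- Step 6 : continuity of energy
  have step6 : ContinuousOn E (Icc 0 T) := by
    have hIoc : uIoc (0:ℝ) h = Ioc 0 h := uIoc_of_le hh.le
    obtain ⟨M, hM⟩ := (isCompact_Icc.prod isCompact_Icc :
        IsCompact (Icc (0:ℝ) h ×ˢ Icc 0 T)).exists_bound_of_continuousOn (S.cont.pow 2)
    intro t₀ ht₀
    rw [hEdef]
    apply intervalIntegral.continuousWithinAt_of_dominated_interval
      (bound := fun _ => M) ?_ ?_ intervalIntegrable_const ?_
    · filter_upwards [self_mem_nhdsWithin] with x hx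
      rw [hIoc]
      exact (((cQ x hx).pow 2).mono Ioc_subset_Icc_self).aestronglyMeasurable measurableSet_Ioc
    · filter_upwards [self_mem_nhdsWithin] with x hx
      refine Eventually.of_forall (fun z hz => ?_)
      have hzIcc : z ∈ Icc (0:ℝ) h := Ioc_subset_Icc_self (by rwa [hIoc] at hz)
      exact hM (z, x) ⟨hzIcc, hx⟩
    · refine Eventually.of_forall (fun z hz => ?_)
      have hzIcc : z ∈ Icc (0:ℝ) h := Ioc_subset_Icc_self (by rwa [hIoc] at hz)
      have : ContinuousOn (fun x => (q z x)^2) (Icc 0 T) :=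
        (S.cont.comp (continuous_const.prodMk continuous_id).continuousOn
          (fun x hx => ⟨hzIcc, hx⟩)).pow 2
      exact this t₀ ht₀
  -- Step 7 : Gronwall
  set φ : ℝ → ℝ := fun s => Real.exp (-(K*s)) * (F s)^2 with hφdef
  have cφ : ContinuousOn φ (Icc 0 T) :=
    ((Real.continuous_exp.comp (continuous_const.mul continuous_id).neg).continuousOn).mul
      (hF.pow 2)
  set P : ℝ → ℝ := fun u => ∫ s in (0:ℝ)..u, φ s with hPdef
  have Pcont : ContinuousOn P (Icc 0 T) := by
    rw [hPdef]
    have := intervalIntegral.continuousOn_primitive_interval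
      (f := φ) (μ := volume) (a := 0) (b := T) ?_
    · rwa [uIcc_of_le hT.le] at this
    · rw [uIcc_of_le hT.le]; exact cφ.integrableOn_Icc
  have hPd : ∀ u ∈ Ioo (0:ℝ) T, HasDerivAt P (φ u) u := by
    intro u hu
    apply intervalIntegral.integral_hasDerivAt_right
    · apply ContinuousOn.intervalIntegrable
      rw [uIcc_of_le hu.1.le]
      exact cφ.mono (Icc_subset_Icc le_rfl hu.2.le)
    · exact (ContinuousOn.stronglyMeasurableAtFilter isOpen_Ioo
        (cφ.mono Ioo_subset_Icc_self) u hu)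
    · exact cφ.continuousAt (Icc_mem_nhds hu.1 hu.2)
  set G : ℝ → ℝ := fun u => Real.exp (-(K*u)) * E u - K * P u with hGdef
  have Gcont : ContinuousOn G (Icc 0 T) :=
    (((Real.continuous_exp.comp (continuous_const.mul continuous_id).neg).continuousOn).mul
      step6).sub (continuousOn_const.mul Pcont)
  have Gderiv : ∀ u ∈ Ioo (0:ℝ) T, HasDerivAt G
      (Real.exp (-(K*u)) * (-K) * E u
        + Real.exp (-(K*u)) * (∫ z in (0:ℝ)..h, 2 * q z u * qt z u) - K * φ u) u := by
    intro u hu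
    have hlin : HasDerivAt (fun u : ℝ => -(K*u)) (-K) u := by
      have := ((hasDerivAt_id u).const_mul K).neg
      simp only [id, mul_one] at this
      exact this
    have hexp : HasDerivAt (fun u => Real.exp (-(K*u))) (Real.exp (-(K*u)) * (-K)) u :=
      hlin.exp
    exact (hexp.mul (step5 u hu)).sub ((hPd u hu).const_mul K)
  have Gnonpos : ∀ u ∈ Ioo (0:ℝ) T,
      Real.exp (-(K*u)) * (-K) * E u
        + Real.exp (-(K*u)) * (∫ z in (0:ℝ)..h, 2 * q z u * qt z u) - K * φ u ≤ 0 := by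
    intro u hu
    have h5b := step5b u hu
    have hpos : (0:ℝ) ≤ Real.exp (-(K*u)) := (Real.exp_pos _).le
    have h6 := mul_le_mul_of_nonneg_left h5b hpos
    show Real.exp (-(K*u)) * (-K) * E u
      + Real.exp (-(K*u)) * (∫ z in (0:ℝ)..h, 2 * q z u * qt z u)
      - K * (Real.exp (-(K*u)) * (F u)^2) ≤ 0
    nlinarith [h6]
  have hGanti : ∀ δ, 0 < δ → AntitoneOn G (Icc δ T) := by
    intro δ hδ
    apply antitoneOn_of_deriv_nonpos (convex_Icc δ T)
      (Gcont.mono (Icc_subset_Icc hδ.le le_rfl))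
    · intro x hx
      rw [interior_Icc] at hx
      have hx' : x ∈ Ioo (0:ℝ) T := ⟨lt_trans hδ hx.1, hx.2⟩
      exact (Gderiv x hx').differentiableAt.differentiableWithinAt
    · intro x hx
      rw [interior_Icc] at hx
      have hx' : x ∈ Ioo (0:ℝ) T := ⟨lt_trans hδ hx.1, hx.2⟩
      rw [(Gderiv x hx').deriv]
      exact Gnonpos x hx'
  have hG0 : G t ≤ G 0 := by
    rcases eq_or_lt_of_le ht.1 with h0|h0
    · rw [← h0]
    · have hsub : Ioc (0:ℝ) t ⊆ Icc 0 T := fun x hx => ⟨hx.1.le, le_trans hx.2 ht.2⟩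
      have hne : (nhdsWithin (0:ℝ) (Ioc (0:ℝ) t)).NeBot := by
        rw [← mem_closure_iff_nhdsWithin_neBot, closure_Ioc h0.ne, left_mem_Icc]
        exact h0.le
      have htend : Tendsto G (nhdsWithin (0:ℝ) (Ioc (0:ℝ) t)) (nhds (G 0)) :=
        (Gcont 0 (left_mem_Icc.2 hT.le)).mono_left (nhdsWithin_mono 0 hsub)
      apply ge_of_tendsto htend
      filter_upwards [self_mem_nhdsWithin] with δ hδ
      exact hGanti δ hδ.1 ⟨le_refl δ, le_trans hδ.2 ht.2⟩ ⟨hδ.2, ht.2⟩ hδ.2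
  -- unfold the Gronwall conclusion
  have hE0 : E 0 = ∫ z in (0:ℝ)..h, (q₀ z)^2 := by
    rw [hEdef]
    apply intervalIntegral.integral_congr
    intro z hz
    show q z 0 ^ 2 = q₀ z ^ 2
    rw [S.ic z (by rwa [uIcc_of_le hh.le] at hz)]
  have hG0' : Real.exp (-(K*t)) * E t - K * P t ≤ E 0 := by
    have h1 : G 0 = E 0 := by
      simp [hGdef, hPdef]
    have h2 : G t = Real.exp (-(K*t)) * E t - K * P t := rfl
    rw [h2, h1] at hG0
    exact hG0
  have intF2 : IntervalIntegrable (fun s => (F s)^2) volume 0 t := by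
    apply ContinuousOn.intervalIntegrable
    rw [uIcc_of_le ht.1]
    exact (hF.mono (Icc_subset_Icc le_rfl ht.2)).pow 2
  have intφt : IntervalIntegrable φ volume 0 t := by
    apply ContinuousOn.intervalIntegrable
    rw [uIcc_of_le ht.1]
    exact cφ.mono (Icc_subset_Icc le_rfl ht.2)
  have hPle : P t ≤ ∫ s in (0:ℝ)..t, (F s)^2 := by
    rw [hPdef]
    apply intervalIntegral.integral_mono_on ht.1 intφt intF2
    intro s hs
    rw [hφdef]
    have h1 : Real.exp (-(K*s)) ≤ 1 := by
      rw [Real.exp_le_one_iff]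
      have : 0 ≤ K * s := mul_nonneg hKpos.le hs.1
      linarith
    exact mul_le_of_le_one_left (sq_nonneg _) h1
  have hIF : 0 ≤ ∫ s in (0:ℝ)..t, (F s)^2 :=
    intervalIntegral.integral_nonneg ht.1 (fun s _ => sq_nonneg _)
  have hI0 : 0 ≤ ∫ z in (0:ℝ)..h, (q₀ z)^2 :=
    intervalIntegral.integral_nonneg hh.le (fun z _ => sq_nonneg _)
  have hEt : Real.exp (-(K*t)) * E t ≤ (∫ z in (0:ℝ)..h, (q₀ z)^2)
      + K * ∫ s in (0:ℝ)..t, (F s)^2 := by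
    have h2 := mul_le_mul_of_nonneg_left hPle hKpos.le
    rw [hE0] at hG0'
    linarith
  have hee : Real.exp (K*t) * Real.exp (-(K*t)) = 1 := by
    rw [← Real.exp_add]; simp
  have hexpE : E t ≤ Real.exp (K*t) * ((∫ z in (0:ℝ)..h, (q₀ z)^2)
      + K * ∫ s in (0:ℝ)..t, (F s)^2) := by
    calc E t = Real.exp (K*t) * Real.exp (-(K*t)) * E t := by rw [hee]; ring
    _ = Real.exp (K*t) * (Real.exp (-(K*t)) * E t) := by ring
    _ ≤ _ := mul_le_mul_of_nonneg_left hEt (Real.exp_nonneg _)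
  have hfin : (∫ z in (0:ℝ)..h, (q₀ z)^2) + K * (∫ s in (0:ℝ)..t, (F s)^2)
      ≤ K * ((1 + t) * (∫ z in (0:ℝ)..h, (q₀ z)^2)
        + (1 + t^2) * ∫ s in (0:ℝ)..t, (F s)^2) := by
    nlinarith [mul_nonneg (sub_nonneg.2 hK1) hI0,
      mul_nonneg (mul_nonneg hKpos.le ht.1) hI0,
      mul_nonneg (mul_nonneg hKpos.le (sq_nonneg t)) hIF]
  have : E t ≤ K * Real.exp (K * t) * ((1 + t) * (∫ z in (0:ℝ)..h, (q₀ z)^2)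
      + (1 + t^2) * ∫ s in (0:ℝ)..t, (F s)^2) := by
    calc E t ≤ Real.exp (K*t) * ((∫ z in (0:ℝ)..h, (q₀ z)^2)
        + K * ∫ s in (0:ℝ)..t, (F s)^2) := hexpE
    _ ≤ Real.exp (K*t) * (K * ((1 + t) * (∫ z in (0:ℝ)..h, (q₀ z)^2)
        + (1 + t^2) * ∫ s in (0:ℝ)..t, (F s)^2)) :=
      mul_le_mul_of_nonneg_left hfin (Real.exp_nonneg _)
    _ = K * Real.exp (K * t) * ((1 + t) * (∫ z in (0:ℝ)..h, (q₀ z)^2)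
        + (1 + t^2) * ∫ s in (0:ℝ)..t, (F s)^2) := by ring
  exact this
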